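/- arXiv:1908.07447 — 4 statements merged into one kernel-verified Lean document; each statement's English description precedes it below -/
import Mathlib

section
/- Let G be a graph, C a cycle in G, and P a path in G vertex-disjoint from C. If there exists an edge (u, v) of C such that u is adjacent to the first vertex of P and v is adjacent to the last vertex of P, then G contains a cycle whose vertex set is V(C) ∪ V(P). -/
private lemma dart_fst_ne_end {V : Type*} {G : SimpleGraph V} :
    ∀ {a b : V} (W : G.Walk a b), W.support.Nodup → ∀ d : G.Dart, d ∈ W.darts → d.fst ≠ b := by
  intro a b W
  induction W with
  | nil => intro _ d hd; simp at hd
  | cons h W ih =>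
    intro hnd d hd
    simp only [SimpleGraph.Walk.support_cons, List.nodup_cons] at hnd
    rw [SimpleGraph.Walk.darts_cons, List.mem_cons] at hd
    rcases hd with rfl | hd
    · intro hab
      exact hnd.1 (hab ▸ W.end_mem_support)
    · exact ih hnd.2 d hd

private lemma closed_mem_tail {V : Type*} {G : SimpleGraph V} {z : V} (C : G.Walk z z)
    (h : C ≠ SimpleGraph.Walk.nil) : ∀ a, a ∈ C.support ↔ a ∈ C.support.tail := by
  intro a
  cases C with
  | nil => exact absurd rfl h
  | cons hadj C' =>
    simp only [SimpleGraph.Walk.support_cons, List.tail_cons, List.mem_cons]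
    constructor
    · rintro (rfl | hm)
      · exact C'.end_mem_support
      · exact hm
    · exact fun hm => Or.inr hm

private lemma combine_aux {V : Type*} (G : SimpleGraph V)
    {z p q : V} (C : G.Walk z z) (P : G.Walk p q)
    (hC : C.IsCycle) (hP : P.IsPath)
    (hdisj : ∀ v, v ∈ C.support → v ∉ P.support)
    (u v : V) (hadj : G.Adj u v) (hd : SimpleGraph.Dart.mk (u, v) hadj ∈ C.darts)
    (hup : G.Adj u p) (hvq : G.Adj v q) :
    ∃ (w : V) (C' : G.Walk w w), C'.IsCycle ∧
      ∀ a, a ∈ C'.support ↔ (a ∈ C.support ∨ a ∈ P.support) := by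
  classical
  have hu : u ∈ C.support := C.dart_fst_mem_support_of_mem_darts hd
  have hE : (C.rotate u hu).IsCycle := hC.rotate hu
  have hdE : SimpleGraph.Dart.mk (u, v) hadj ∈ (C.rotate u hu).darts :=
    ((C.rotate_darts u hu).mem_iff).mpr hd
  have hmemE : ∀ a, a ∈ (C.rotate u hu).support ↔ a ∈ C.support := by
    intro a
    rw [closed_mem_tail (C.rotate u hu) hE.ne_nil a, closed_mem_tail C hC.ne_nil a]
    exact (C.support_rotate u hu).mem_iff
  obtain ⟨w, h', E', hEeq⟩ :
      ∃ (w : V) (h' : G.Adj u w) (E' : G.Walk w u), C.rotate u hu = SimpleGraph.Walk.cons h' E' := by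
    cases hEeq : C.rotate u hu with
    | nil => exact absurd hEeq hE.ne_nil
    | cons h' E' => exact ⟨_, h', E', rfl⟩
  rw [hEeq] at hE hdE hmemE
  rw [SimpleGraph.Walk.cons_isCycle_iff] at hE
  have hwv : w = v := by
    rw [SimpleGraph.Walk.darts_cons, List.mem_cons] at hdE
    rcases hdE with hdE | hdE
    · exact (congrArg Prod.snd (congrArg SimpleGraph.Dart.toProd hdE)).symm
    · exact absurd rfl (dart_fst_ne_end E' hE.1.support_nodup _ hdE)
  subst hwv
  have hsubC : ∀ a, a ∈ E'.support → a ∈ C.support := fun a ha =>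
    (hmemE a).mp (by simp [ha])
  refine ⟨u, SimpleGraph.Walk.cons hup (P.append (SimpleGraph.Walk.cons hvq.symm E')), ?_, ?_⟩
  · rw [SimpleGraph.Walk.cons_isCycle_iff]
    constructor
    · rw [SimpleGraph.Walk.isPath_def, SimpleGraph.Walk.support_append]
      simp only [SimpleGraph.Walk.support_cons, List.tail_cons]
      refine List.Nodup.append hP.support_nodup hE.1.support_nodup ?_
      intro a haP haE'
      exact hdisj a (hsubC a haE') haP
    · rw [SimpleGraph.Walk.edges_append]
      simp only [SimpleGraph.Walk.edges_cons, List.mem_append, List.mem_cons]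
      rintro (hmem | hmem | hmem)
      · exact hdisj u hu (P.fst_mem_support_of_mem_edges hmem)
      · rw [Sym2.eq_iff] at hmem
        rcases hmem with ⟨rfl, rfl⟩ | ⟨rfl, rfl⟩
        · exact hdisj u hu P.end_mem_support
        · exact hadj.ne rfl
      · exact hdisj p (hsubC p (E'.fst_mem_support_of_mem_edges
          (Sym2.eq_swap ▸ hmem))) P.start_mem_support
  · intro a
    have hmE : a ∈ C.support ↔ a = u ∨ a ∈ E'.support := by
      rw [← hmemE a]; simp
    simp only [SimpleGraph.Walk.support_cons, SimpleGraph.Walk.support_append, List.tail_cons,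
      List.mem_cons, List.mem_append, hmE]
    tauto

/-- a cycle and a vertex-disjoint path whose endpoints adjoin an
edge of the cycle can be combined into a cycle on V(C) ∪ V(P). -/
theorem combine_cycle_path_into_cycle {V : Type*} (G : SimpleGraph V)
    {z p q : V} (C : G.Walk z z) (P : G.Walk p q)
    (hC : C.IsCycle) (hP : P.IsPath)
    (hdisj : ∀ v, v ∈ C.support → v ∉ P.support)
    (u v : V) (he : s(u, v) ∈ C.edges)
    (hup : G.Adj u p) (hvq : G.Adj v q) :
    ∃ (w : V) (C' : G.Walk w w), C'.IsCycle ∧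
      ∀ a, a ∈ C'.support ↔ (a ∈ C.support ∨ a ∈ P.support) := by
  rw [SimpleGraph.Walk.edges, List.mem_map] at he
  obtain ⟨d, hd, hde⟩ := he
  obtain ⟨⟨a, b⟩, hab⟩ := d
  have h2 : s(a, b) = s(u, v) := hde
  rw [Sym2.eq_iff] at h2
  rcases h2 with ⟨rfl, rfl⟩ | ⟨rfl, rfl⟩
  · exact combine_aux G C P hC hP hdisj _ _ hab hd hup hvq
  · obtain ⟨w, C', hC', hsupp⟩ :=
      combine_aux G C P.reverse hC hP.reverse
        (fun x hx hxP => hdisj x hx (by simpa using hxP)) _ _ hab hd hvq hup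
    exact ⟨w, C', hC', fun x => by simpa using hsupp x⟩
end

section
/- In the C-shaped supergrid graph C(m, n; k, l; c, d) with a = m − k = 1, the vertex v = (1, c + 1) is a cut vertex; consequently, if s and t both satisfy sy, ty ≤ c, or both satisfy sy, ty > c + l, then there is no Hamiltonian (s,t)-path in C(m, n; k, l; c, d). -/
/-- The vertex set of the C-shaped supergrid graph C(m,n;k,l;c,d). -/
def CSet (m n k l c : ℤ) : Set (ℤ × ℤ) :=
  {p | (1 ≤ p.1 ∧ p.1 ≤ m ∧ 1 ≤ p.2 ∧ p.2 ≤ n) ∧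
    ¬ (m - k + 1 ≤ p.1 ∧ p.1 ≤ m ∧ c + 1 ≤ p.2 ∧ p.2 ≤ c + l)}

/-- The C-shaped supergrid graph C(m,n;k,l;c,d). -/
def CGraph (m n k l c : ℤ) : SimpleGraph (CSet m n k l c) where
  Adj u v := u ≠ v ∧ |(u : ℤ × ℤ).1 - (v : ℤ × ℤ).1| ≤ 1 ∧
    |(u : ℤ × ℤ).2 - (v : ℤ × ℤ).2| ≤ 1
  symm := by
    constructor
    rintro u v ⟨h, h1, h2⟩
    exact ⟨h.symm, by rw [abs_sub_comm]; exact h1, by rw [abs_sub_comm]; exact h2⟩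
  loopless := by constructor; rintro u ⟨h, -⟩; exact h rfl

lemma CSet.bounds {m n k l c : ℤ} (z : CSet m n k l c) :
    (1 ≤ (z : ℤ × ℤ).1 ∧ (z : ℤ × ℤ).1 ≤ m ∧ 1 ≤ (z : ℤ × ℤ).2 ∧ (z : ℤ × ℤ).2 ≤ n) ∧
    ¬ (m - k + 1 ≤ (z : ℤ × ℤ).1 ∧ (z : ℤ × ℤ).1 ≤ m ∧ c + 1 ≤ (z : ℤ × ℤ).2 ∧
        (z : ℤ × ℤ).2 ≤ c + l) := z.2

/-- The only vertex with y-coordinate c+1 is (1, c+1) when a = m - k = 1. -/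
lemma mid_unique {m n k l c : ℤ} (hl : 1 ≤ l) (ha : m - k = 1)
    (v : CSet m n k l c) (hv : (v : ℤ × ℤ) = (1, c + 1))
    (z : CSet m n k l c) (hz : (z : ℤ × ℤ).2 = c + 1) : z = v := by
  obtain ⟨⟨h1, h2, h3, h4⟩, h5⟩ := CSet.bounds z
  apply Subtype.ext
  rw [hv]
  have hx : (z : ℤ × ℤ).1 = 1 := by omega
  exact Prod.ext hx hz

/-- An edge avoiding v cannot cross the line y = c + 1. -/
lemma adj_side {m n k l c : ℤ} (hl : 1 ≤ l) (ha : m - k = 1)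
    (v : CSet m n k l c) (hv : (v : ℤ × ℤ) = (1, c + 1))
    {u w : CSet m n k l c} (h : (CGraph m n k l c).Adj u w)
    (hu : u ≠ v) (hw : w ≠ v) :
    ((u : ℤ × ℤ).2 ≤ c ↔ (w : ℤ × ℤ).2 ≤ c) := by
  obtain ⟨-, -, h2⟩ := h
  rw [abs_le] at h2
  have hu' : (u : ℤ × ℤ).2 ≠ c + 1 := fun hh => hu (mid_unique hl ha v hv u hh)
  have hw' : (w : ℤ × ℤ).2 ≠ c + 1 := fun hh => hw (mid_unique hl ha v hv w hh)
  omega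

/-- Along a walk avoiding v, all vertices are on the same side of y = c + 1. -/
lemma walk_side {m n k l c : ℤ} (hl : 1 ≤ l) (ha : m - k = 1)
    (v : CSet m n k l c) (hv : (v : ℤ × ℤ) = (1, c + 1))
    {x y : CSet m n k l c} (w : (CGraph m n k l c).Walk x y)
    (hnv : v ∉ w.support) :
    ∀ z ∈ w.support, ((z : ℤ × ℤ).2 ≤ c ↔ (x : ℤ × ℤ).2 ≤ c) := by
  induction w with
  | nil =>
    intro z hz
    rw [SimpleGraph.Walk.support_nil, List.mem_singleton] at hz
    rw [hz]
  | @cons a b y' h p ih =>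
    intro z hz
    rw [SimpleGraph.Walk.support_cons, List.mem_cons] at hnv hz
    push_neg at hnv
    obtain ⟨hva, hvp⟩ := hnv
    rcases hz with rfl | hz
    · rfl
    · have hb : b ∈ p.support := p.start_mem_support
      have h1 := ih hvp z hz
      have h2 := adj_side hl ha v hv h (Ne.symm hva)
        (fun hbv => hvp (hbv ▸ hb))
      exact h1.trans h2.symm

/-- Every non-v vertex on a Hamiltonian (s,t)-path is on the side of s or of t. -/
lemma ham_side {m n k l c : ℤ} (hl : 1 ≤ l) (ha : m - k = 1)
    (v : CSet m n k l c) (hv : (v : ℤ × ℤ) = (1, c + 1))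
    {s t : CSet m n k l c} (hs : s ≠ v) (ht : t ≠ v)
    (p : (CGraph m n k l c).Walk s t) (hp : p.IsHamiltonian)
    (z : CSet m n k l c) (hz : z ≠ v) :
    ((z : ℤ × ℤ).2 ≤ c ↔ (s : ℤ × ℤ).2 ≤ c) ∨
    ((z : ℤ × ℤ).2 ≤ c ↔ (t : ℤ × ℤ).2 ≤ c) := by
  classical
  have hp : ∀ x, p.support.count x = 1 := by
    intro x
    have := hp x
    rwa [lawful_beq_subsingleton instBEqOfDecidableEq Subtype.instBEq] at this
  have hvmem : v ∈ p.support := by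
    have := hp v
    exact List.count_pos_iff.mp (by omega)
  have hzmem : z ∈ p.support := by
    have := hp z
    exact List.count_pos_iff.mp (by omega)
  set q := p.takeUntil v hvmem with hq
  set r := p.dropUntil v hvmem with hr
  have hspec : q.append r = p := p.take_spec hvmem
  have hsupp : p.support = q.support ++ r.support.tail := by
    rw [← hspec, SimpleGraph.Walk.support_append]
  have hcountq : q.support.count v = 1 := by
    have := p.count_support_takeUntil_eq_one hvmem
    rwa [lawful_beq_subsingleton instBEqOfDecidableEq Subtype.instBEq] at this
  have hcountr : r.support.tail.count v = 0 := by
    have h1 := hp v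
    rw [hsupp, List.count_append] at h1
    omega
  rw [hsupp, List.mem_append] at hzmem
  rcases hzmem with hzq | hzr
  · -- z is in q : Walk s v; look at q.reverse : Walk v s
    left
    have hnn : ¬ q.reverse.Nil := SimpleGraph.Walk.not_nil_of_ne (Ne.symm hs)
    obtain ⟨u1, hadj, w, hw⟩ := SimpleGraph.Walk.not_nil_iff.mp hnn
    have hsup : q.support.reverse = v :: w.support := by
      rw [← SimpleGraph.Walk.support_reverse, hw, SimpleGraph.Walk.support_cons]
    have hvw : v ∉ w.support := by
      have : (v :: w.support).count v = 1 := by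
        rw [← hsup, List.count_reverse, hcountq]
      simp only [List.count_cons_self] at this
      exact List.count_eq_zero.mp (by omega)
    have hzw : z ∈ w.support := by
      have : z ∈ q.support.reverse := List.mem_reverse.mpr hzq
      rw [hsup, List.mem_cons] at this
      rcases this with rfl | h
      · exact absurd rfl hz
      · exact h
    have h1 := walk_side hl ha v hv w hvw z hzw
    have h2 := walk_side hl ha v hv w hvw s (by
      have : s ∈ q.reverse.support := by
        rw [SimpleGraph.Walk.support_reverse, List.mem_reverse]
        exact q.start_mem_support
      rw [hw, SimpleGraph.Walk.support_cons, List.mem_cons] at this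
      rcases this with h | h
      · exact absurd h hs
      · exact h)
    exact h1.trans h2.symm
  · -- z is in r.support.tail; r : Walk v t
    right
    have hnn : ¬ r.Nil := SimpleGraph.Walk.not_nil_of_ne (Ne.symm ht)
    obtain ⟨u1, hadj, w, hw⟩ := SimpleGraph.Walk.not_nil_iff.mp hnn
    have htail : r.support.tail = w.support := by
      rw [hw, SimpleGraph.Walk.support_cons, List.tail_cons]
    have hvw : v ∉ w.support := by
      rw [htail] at hcountr
      exact List.count_eq_zero.mp hcountr
    rw [htail] at hzr
    have h1 := walk_side hl ha v hv w hvw z hzr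
    have h2 := walk_side hl ha v hv w hvw t w.end_mem_support
    exact h1.trans h2.symm

/-- in C(m,n;k,l;c,d) with a = m − k = 1, the vertex (1, c+1) is a
cut vertex, and if s, t both have y-coordinate ≤ c, or both have y-coordinate
> c + l, then there is no Hamiltonian (s,t)-path. -/
theorem Cshaped_a_eq_one_cut_vertex (m n k l c d : ℤ)
    (hm : 2 ≤ m) (hn : 3 ≤ n) (hk : 1 ≤ k) (hl : 1 ≤ l) (hc : 1 ≤ c)
    (hd : d = n - l - c) (hd1 : 1 ≤ d) (ha : m - k = 1)
    (v : CSet m n k l c) (hv : (v : ℤ × ℤ) = (1, c + 1)) :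
    (¬ ((CGraph m n k l c).induce {u | u ≠ v}).Connected) ∧
    (∀ s t : CSet m n k l c, s ≠ t →
      (((s : ℤ × ℤ).2 ≤ c ∧ (t : ℤ × ℤ).2 ≤ c) ∨
        (c + l < (s : ℤ × ℤ).2 ∧ c + l < (t : ℤ × ℤ).2)) →
      ¬ ∃ p : (CGraph m n k l c).Walk s t, p.IsHamiltonian) := by
  classical
  have hA : ((1 : ℤ), (1 : ℤ)) ∈ CSet m n k l c := by
    constructor
    · exact ⟨le_refl 1, by omega, le_refl 1, by omega⟩
    · omega
  have hB : ((1 : ℤ), c + l + 1) ∈ CSet m n k l c := by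
    constructor
    · exact ⟨le_refl 1, by omega, by omega, by omega⟩
    · omega
  set A : CSet m n k l c := ⟨((1 : ℤ), (1 : ℤ)), hA⟩ with hAdef
  set B : CSet m n k l c := ⟨((1 : ℤ), c + l + 1), hB⟩ with hBdef
  have hAv : A ≠ v := by
    intro h
    have : (A : ℤ × ℤ) = (1, c + 1) := h ▸ hv
    rw [hAdef] at this
    simp only [Prod.mk.injEq] at this
    omega
  have hBv : B ≠ v := by
    intro h
    have : (B : ℤ × ℤ) = (1, c + 1) := h ▸ hv
    rw [hBdef] at this
    simp only [Prod.mk.injEq] at this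
    omega
  constructor
  · intro hcon
    obtain ⟨w⟩ := hcon.preconnected ⟨A, hAv⟩ ⟨B, hBv⟩
    let f := (SimpleGraph.Embedding.induce (G := CGraph m n k l c) {u | u ≠ v}).toHom
    have hs : v ∉ (w.map f).support := by
      rw [SimpleGraph.Walk.support_map]
      intro hmem
      obtain ⟨u, _, hu⟩ := List.mem_map.mp hmem
      exact u.2 hu
    have h1 := walk_side hl ha v hv (w.map f) hs A (w.map f).start_mem_support
    have h2 := walk_side hl ha v hv (w.map f) hs B (w.map f).end_mem_support
    have hAc : (A : ℤ × ℤ).2 ≤ c := by rw [hAdef]; exact hc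
    have hBc : ¬ (B : ℤ × ℤ).2 ≤ c := by rw [hBdef]; simp; omega
    exact hBc (h2.mpr (h1.mp hAc))
  · rintro s t hst hside ⟨p, hp⟩
    have hsv : s ≠ v := by
      intro h
      have : (s : ℤ × ℤ) = (1, c + 1) := h ▸ hv
      rcases hside with ⟨h1, -⟩ | ⟨h1, -⟩ <;> rw [this] at h1 <;> simp at h1 <;> omega
    have htv : t ≠ v := by
      intro h
      have : (t : ℤ × ℤ) = (1, c + 1) := h ▸ hv
      rcases hside with ⟨-, h1⟩ | ⟨-, h1⟩ <;> rw [this] at h1 <;> simp at h1 <;> omega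
    rcases hside with ⟨h1, h2⟩ | ⟨h1, h2⟩
    · have := ham_side hl ha v hv hsv htv p hp B hBv
      have hBc : ¬ (B : ℤ × ℤ).2 ≤ c := by rw [hBdef]; simp; omega
      rcases this with h | h
      · exact hBc (h.mpr h1)
      · exact hBc (h.mpr h2)
    · have := ham_side hl ha v hv hsv htv p hp A hAv
      have hAc : (A : ℤ × ℤ).2 ≤ c := by rw [hAdef]; exact hc
      rcases this with h | h
      · rw [h] at hAc; omega
      · rw [h] at hAc; omega
end

section
/- If the C-shaped supergrid graph C(m, n; k, l; c, d) satisfies a = m − k = 1 or contains a vertex of degree 1, then it has no Hamiltonian cycle. -/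
open SimpleGraph Walk

/-- A cycle through `w` yields two distinct neighbors of `w`. -/
lemma cycle_two_neighbors {V : Type*} [DecidableEq V] {G : SimpleGraph V} {v w : V}
    (p : G.Walk v v) (hp : p.IsCycle) (hw : w ∈ p.support) :
    ∃ b t, b ≠ t ∧ G.Adj w b ∧ G.Adj w t := by
  have hq : (p.rotate w hw).IsCycle := hp.rotate hw
  set q := p.rotate w hw with hqdef
  clear_value q
  cases q with
  | nil => exact absurd rfl hq.ne_nil
  | cons h q₁ =>
    rename_i b
    rw [Walk.cons_isCycle_iff] at hq
    obtain ⟨hpath, hne⟩ := hq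
    -- q₁ : Walk b w ; consider its reverse, a path from w to b
    have hrev : q₁.reverse.IsPath := hpath.reverse
    cases hq2 : q₁.reverse with
    | nil => exact absurd rfl h.ne
    | cons h' q₂ =>
      rename_i t
      refine ⟨b, t, ?_, h, h'⟩
      rintro rfl
      apply hne
      have : s(w, b) ∈ q₁.reverse.edges := by rw [hq2]; simp
      rwa [Walk.edges_reverse, List.mem_reverse] at this

/-- Rotating a closed walk preserves support membership. -/
lemma mem_support_rotate {V : Type*} [DecidableEq V] {G : SimpleGraph V} {v w x : V}
    (p : G.Walk v v) (hw : w ∈ p.support) (hx : x ∈ p.support) :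
    x ∈ (p.rotate w hw).support := by
  rw [Walk.rotate, Walk.mem_support_append_iff]
  conv at hx => rw [← p.take_spec hw]
  rw [Walk.mem_support_append_iff] at hx
  rcases hx with hx | hx
  · rw [(p.takeUntil w hw).support_eq_cons] at hx
    rcases List.mem_cons.1 hx with rfl | hx
    · exact Or.inl (p.dropUntil w hw).end_mem_support
    · exact Or.inr (List.mem_of_mem_tail hx)
  · exact Or.inl hx

/-- From a Hamiltonian cycle we get, for any `x z ≠ w`, a walk from `x` to `z`
avoiding `w`. -/
lemma ham_cycle_avoid {V : Type*} [DecidableEq V] {G : SimpleGraph V} {v w x z : V}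
    (p : G.Walk v v) (hp : p.IsHamiltonianCycle) (hx : x ≠ w) (hz : z ≠ w) :
    ∃ r : G.Walk x z, w ∉ r.support := by
  have hw : w ∈ p.support := hp.mem_support w
  have hq : (p.rotate w hw).IsCycle := hp.isCycle.rotate hw
  have hxq : x ∈ (p.rotate w hw).support := mem_support_rotate p hw (hp.mem_support x)
  have hzq : z ∈ (p.rotate w hw).support := mem_support_rotate p hw (hp.mem_support z)
  set q := p.rotate w hw with hqdef
  clear_value q
  cases q with
  | nil => exact absurd rfl hq.ne_nil
  | cons h q₁ =>
    rename_i b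
    rw [Walk.cons_isCycle_iff] at hq
    obtain ⟨hpath, -⟩ := hq
    have hx₁ : x ∈ q₁.support := by
      rcases List.mem_cons.1 (by simpa using hxq) with rfl | hx₁
      · exact absurd rfl hx
      · exact hx₁
    have hz₁ : z ∈ q₁.support := by
      rcases List.mem_cons.1 (by simpa using hzq) with rfl | hz₁
      · exact absurd rfl hz
      · exact hz₁
    -- q₁ : Walk b w; reverse it so w is the head, then drop w.
    have hrevnil : ¬ q₁.reverse.Nil := fun hnil => h.ne hnil.eq
    have hwt : w ∉ q₁.reverse.tail.support := by
      have hnodup : q₁.reverse.support.Nodup := hpath.reverse.support_nodup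
      rw [← Walk.cons_support_tail (p := q₁.reverse) hrevnil] at hnodup
      exact (List.nodup_cons.1 hnodup).1
    set s := q₁.reverse.tail with hsdef
    have hxs : x ∈ s.support := by
      have : x ∈ q₁.reverse.support := by rwa [Walk.support_reverse, List.mem_reverse]
      rw [← Walk.cons_support_tail (p := q₁.reverse) hrevnil] at this
      rcases List.mem_cons.1 this with rfl | h' ; · exact absurd rfl hx
      · exact h'
    have hzs : z ∈ s.support := by
      have : z ∈ q₁.reverse.support := by rwa [Walk.support_reverse, List.mem_reverse]
      rw [← Walk.cons_support_tail (p := q₁.reverse) hrevnil] at this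
      rcases List.mem_cons.1 this with rfl | h' ; · exact absurd rfl hz
      · exact h'
    refine ⟨(s.takeUntil x hxs).reverse.append (s.takeUntil z hzs), ?_⟩
    rw [Walk.mem_support_append_iff, Walk.support_reverse, List.mem_reverse]
    rintro (h' | h')
    · exact hwt (s.support_takeUntil_subset hxs h')
    · exact hwt (s.support_takeUntil_subset hzs h')

/-- When `m - k = 1`, any walk from the bottom part (`y ≤ c`) to the top part
(`y ≥ c + 2`) must pass through the vertex `(1, c+1)`. -/
lemma walk_through_cut (m n k l c : ℤ) (hl : 1 ≤ l) (hak : m - k = 1)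
    (w₀ : CSet m n k l c) (hw₀ : (w₀ : ℤ × ℤ) = (1, c + 1)) :
    ∀ {x z : CSet m n k l c} (r : (CGraph m n k l c).Walk x z),
      (x : ℤ × ℤ).2 ≤ c → c + 2 ≤ (z : ℤ × ℤ).2 → w₀ ∈ r.support := by
  intro x z r
  induction r with
  | nil => intro h1 h2; omega
  | @cons x u z h r ih =>
    intro hx hz
    rw [SimpleGraph.Walk.support_cons]
    by_cases hu : u = w₀
    · exact List.mem_cons.2 (Or.inr (hu ▸ r.start_mem_support))
    · refine List.mem_cons.2 (Or.inr ?_)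
      obtain ⟨-, -, hy⟩ := h
      rw [abs_le] at hy
      have huy : (u : ℤ × ℤ).2 ≤ c + 1 := by omega
      rcases lt_or_ge (u : ℤ × ℤ).2 (c + 1) with hlt | hge
      · exact ih (by omega) hz
      · exfalso
        apply hu
        have huy' : (u : ℤ × ℤ).2 = c + 1 := le_antisymm huy hge
        obtain ⟨⟨hx1, hx2, -, -⟩, hrem⟩ := u.2
        have hux : (u : ℤ × ℤ).1 = 1 := by
          by_contra hne
          exact hrem ⟨by omega, hx2, by omega, by omega⟩
        apply Subtype.ext
        rw [hw₀]
        exact Prod.ext hux huy'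

/-- if C(m,n;k,l;c,d) satisfies a = m − k = 1 or has a vertex of
degree 1, then it has no Hamiltonian cycle. -/
theorem Cshaped_no_hamiltonian_cycle (m n k l c d : ℤ)
    (hm : 2 ≤ m) (hn : 3 ≤ n) (hk : 1 ≤ k) (hl : 1 ≤ l) (hc : 1 ≤ c)
    (hd : d = n - l - c) (hd1 : 1 ≤ d) (ha : 1 ≤ m - k)
    (hF6 : m - k = 1 ∨ ∃ w : CSet m n k l c,
      ((CGraph m n k l c).neighborSet w).ncard = 1) :
    ¬ ∃ (v : CSet m n k l c) (cyc : (CGraph m n k l c).Walk v v),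
        cyc.IsHamiltonianCycle := by
  rintro ⟨v, cyc, hcyc⟩
  rcases hF6 with hak | ⟨w, hw⟩
  · -- the cut-vertex (1, c+1)
    have hcl : c + l + 1 ≤ n := by omega
    have hw₀mem : ((1 : ℤ), c + 1) ∈ CSet m n k l c :=
      ⟨⟨le_refl 1, by omega, by omega, by omega⟩, fun ⟨h1, _, _, _⟩ => by omega⟩
    set w₀ : CSet m n k l c := ⟨((1 : ℤ), c + 1), hw₀mem⟩ with hw₀def
    have hx₀mem : ((1 : ℤ), (1 : ℤ)) ∈ CSet m n k l c :=
      ⟨⟨le_refl 1, by omega, le_refl 1, by omega⟩, fun ⟨_, _, h3, _⟩ => by omega⟩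
    have hz₀mem : ((1 : ℤ), n) ∈ CSet m n k l c :=
      ⟨⟨le_refl 1, by omega, by omega, le_refl n⟩, fun ⟨h1, _, _, _⟩ => by omega⟩
    set x₀ : CSet m n k l c := ⟨((1 : ℤ), (1 : ℤ)), hx₀mem⟩ with hx₀def
    set z₀ : CSet m n k l c := ⟨((1 : ℤ), n), hz₀mem⟩ with hz₀def
    have hx₀ : x₀ ≠ w₀ := by
      intro hh
      have := congrArg (fun p : CSet m n k l c => (p : ℤ × ℤ).2) hh
      simp [hx₀def, hw₀def] at this
      omega
    have hz₀ : z₀ ≠ w₀ := by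
      intro hh
      have := congrArg (fun p : CSet m n k l c => (p : ℤ × ℤ).2) hh
      simp [hz₀def, hw₀def] at this
      omega
    obtain ⟨r, hr⟩ := ham_cycle_avoid cyc hcyc hx₀ hz₀
    exact hr (walk_through_cut m n k l c hl hak w₀ rfl r (by simp [hx₀def]; omega)
      (by simp [hz₀def]; omega))
  · -- degree-one vertex
    obtain ⟨b, t, hbt, hb, ht⟩ :=
      cycle_two_neighbors cyc hcyc.isCycle (hcyc.mem_support w)
    obtain ⟨a, hset⟩ := Set.ncard_eq_one.1 hw
    have hbmem : b ∈ (CGraph m n k l c).neighborSet w := hb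
    have htmem : t ∈ (CGraph m n k l c).neighborSet w := ht
    rw [hset] at hbmem htmem
    exact hbt (hbmem.trans htmem.symm)
end

section
/- Let G be a finite graph, C a cycle in G, and P a vertex-disjoint path in G from a to b. Suppose there is an edge (u, v) on C with u ~ a and v ~ b. Then G contains a cycle of length |V(C)| + |V(P)|. -/
open SimpleGraph Walk

/-- If a path ends at `u` and contains the edge `s(u,v)`, that edge must be its
last edge. -/
lemma path_last_edge {V : Type*} {G : SimpleGraph V} {w u v : V}
    (p : G.Walk w u) (hp : p.IsPath) (hm : s(u, v) ∈ p.edges) :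
    ∃ (q : G.Walk w v) (h : G.Adj v u), p = q.concat h := by
  induction p with
  | nil => simp at hm
  | @cons w x u h' p' ih =>
    rw [edges_cons, List.mem_cons] at hm
    rcases hm with hm | hm
    · rw [Sym2.eq_iff] at hm
      rcases hm with ⟨hu, hv⟩ | ⟨hu, hv⟩
      · -- u = w : impossible since the path goes from w to u with an edge
        exfalso
        subst hu
        have := hp.support_nodup
        simp only [support_cons, List.nodup_cons] at this
        exact this.1 (end_mem_support p')
      · -- u = x, v = w : p' is a path from u to u, hence nil
        subst hu; subst hv
        have hnil : p' = Walk.nil := isPath_iff_eq_nil.mp hp.of_cons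
        subst hnil
        exact ⟨Walk.nil, h', by simp [concat_nil]⟩
    · obtain ⟨q, h2, rfl⟩ := ih hp.of_cons hm
      exact ⟨Walk.cons h' q, h2, by rw [concat_cons]⟩

/-- From a cycle based at `u` containing edge `s(u,v)`, extract a path from
`v` to `u` covering the rest of the cycle. -/
lemma cycle_split {V : Type*} {G : SimpleGraph V} {u v : V}
    (Q : G.Walk u u) (hQ : Q.IsCycle) (hm : s(u, v) ∈ Q.edges) :
    ∃ R : G.Walk v u, R.IsPath ∧ R.length + 1 = Q.length ∧
      ∀ x ∈ R.support, x ∈ Q.support := by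
  cases Q with
  | nil => simp at hm
  | @cons u w _ h R' =>
    rw [cons_isCycle_iff] at hQ
    rw [edges_cons, List.mem_cons] at hm
    rcases hm with hm | hm
    · rw [Sym2.eq_iff] at hm
      rcases hm with ⟨hu, hv⟩ | ⟨hu, hv⟩
      · subst hv
        exact ⟨R', hQ.1, by simp, fun x hx => by simp [support_cons, hx]⟩
      · exact absurd hu h.ne
    · obtain ⟨q, h2, rfl⟩ := path_last_edge R' hQ.1 hm
      have hqpath : q.IsPath := by
        rw [concat_eq_append] at hQ
        exact hQ.1.of_append_left
      have husup : u ∉ q.support := by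
        have := hQ.1.support_nodup
        rw [support_concat, List.nodup_append] at this
        intro hu
        exact this.2.2 u hu u (by simp) rfl
      refine ⟨q.reverse.concat h.symm, ?_, ?_, ?_⟩
      · rw [isPath_def, support_concat, List.nodup_append]
        refine ⟨by simpa using hqpath.support_nodup, List.nodup_singleton u, ?_⟩
        intro x hx y hxu rfl
        simp only [List.mem_singleton] at hxu
        subst hxu
        exact husup (by simpa using hx)
      · simp only [length_concat, length_reverse, length_cons]
      · intro x hx
        rw [support_concat, List.mem_append] at hx
        rcases hx with hx | hx
        · simp only [support_reverse, List.mem_reverse] at hx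
          have hx2 : x ∈ (q.concat h2).support := by
            rw [support_concat]; simp [hx]
          rw [support_cons]
          exact List.mem_cons_of_mem _ hx2
        · simp only [List.mem_singleton] at hx
          subst hx
          rw [support_cons]
          exact List.mem_cons_self


/-- combining a cycle C and a vertex-disjoint path P from a to b,
where an edge (u,v) of C satisfies u ~ a and v ~ b, yields a cycle with
|V(C)| + |V(P)| vertices, i.e. of length C.length + P.support.length. -/
theorem cycle_path_combination_length {V : Type*} (G : SimpleGraph V)
    {z a b : V} (C : G.Walk z z) (P : G.Walk a b)
    (hC : C.IsCycle) (hP : P.IsPath)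
    (hdisj : ∀ v, v ∈ C.support → v ∉ P.support)
    (u v : V) (he : s(u, v) ∈ C.edges)
    (hua : G.Adj u a) (hvb : G.Adj v b) :
    ∃ (w : V) (C' : G.Walk w w), C'.IsCycle ∧
      C'.length = C.length + P.support.length := by
  classical
  have huv : G.Adj u v := C.adj_of_mem_edges he
  have hu : u ∈ C.support := C.fst_mem_support_of_mem_edges he
  set Q : G.Walk u u := C.rotate u hu with hQdef
  have hQcyc : Q.IsCycle := hC.rotate hu
  have hQe : s(u, v) ∈ Q.edges := (C.rotate_edges u hu).mem_iff.mpr he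
  have hQlen : Q.length = C.length := by
    rw [← length_edges, ← length_edges]
    exact (C.rotate_edges u hu).perm.length_eq
  have hQsup : ∀ x ∈ Q.support, x ∈ C.support := by
    intro x hx
    rw [mem_support_iff] at hx
    rcases hx with rfl | hx
    · exact hu
    · have := (support_rotate C u hu).mem_iff.mp hx
      exact List.mem_of_mem_tail this
  obtain ⟨R, hRpath, hRlen, hRsup⟩ := cycle_split Q hQcyc hQe
  have hRC : ∀ x ∈ R.support, x ∈ C.support := fun x hx => hQsup x (hRsup x hx)
  -- Build the new cycle : u → a →P→ b → v →R→ u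
  set W : G.Walk a u := P.append (Walk.cons hvb.symm R) with hWdef
  refine ⟨u, Walk.cons hua W, ?_, ?_⟩
  · rw [cons_isCycle_iff]
    constructor
    · rw [isPath_def, support_append, support_cons]
      simp only [List.tail_cons]
      rw [List.nodup_append]
      refine ⟨hP.support_nodup, hRpath.support_nodup, ?_⟩
      intro x hx y hx' rfl
      exact hdisj x (hRC x hx') hx
    · rw [edges_append, List.mem_append, edges_cons, List.mem_cons]
      rintro (hmem | hmem | hmem)
      · exact hdisj u hu (P.fst_mem_support_of_mem_edges hmem)
      · rw [Sym2.eq_iff] at hmem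
        rcases hmem with ⟨hb, hv'⟩ | ⟨hv', hb⟩
        · exact hdisj u hu (hb ▸ P.end_mem_support)
        · exact huv.ne hv'
      · exact hdisj a (hRC a (R.snd_mem_support_of_mem_edges hmem))
          P.start_mem_support
  · rw [length_cons, hWdef, length_append, length_cons, length_support]
    omega
end
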